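/- In the braid group B_q, for 1 ≤ m ≤ q−1, the identity Δ_{q-1}^{m+1} · Π_{q-1}^m · Π_{q-2}^{m-1} ⋯ Π_{q-m+1}^2 · Π_{q-m} = Π_{q-1}^m · Π_{q-2}^{m-1} ⋯ Π_{q-m+1}^2 · Π_{q-m} · Δ_{q-m-1} holds, where each generator index in Δ_{q-1}^{m+1} drops by m when pushed past the m factors. -/

import Mathlib

/-- Defining relations for the braid group `B n` on `n` strands, with Artin
generators `σ_1, …, σ_{n-1}`.  Generators with index `0` or `≥ n` are killed,
so the presented group is exactly `B n`. -/
def braidRels (n : ℕ) : Set (FreeGroup ℕ) :=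
  {r | (∃ i, 1 ≤ i ∧ i + 2 ≤ n ∧
        r = FreeGroup.of i * FreeGroup.of (i + 1) * FreeGroup.of i *
            (FreeGroup.of (i + 1) * FreeGroup.of i * FreeGroup.of (i + 1))⁻¹) ∨
      (∃ i j, 1 ≤ i ∧ i + 2 ≤ j ∧ j + 1 ≤ n ∧
        r = FreeGroup.of i * FreeGroup.of j * (FreeGroup.of j * FreeGroup.of i)⁻¹) ∨
      (∃ i, (i = 0 ∨ n ≤ i) ∧ r = FreeGroup.of i)}

/-- The braid group on `n` strands. -/
def BraidGroup (n : ℕ) : Type := PresentedGroup (braidRels n)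

instance (n : ℕ) : Group (BraidGroup n) := by unfold BraidGroup; infer_instance

/-- The Artin generator `σ_i` of `B n`. -/
def sigma (n i : ℕ) : BraidGroup n := PresentedGroup.of i

/-- `Π_s^l = σ_l σ_{l+1} ⋯ σ_s`  (the identity when `s < l`). -/
def Pi' (n l s : ℕ) : BraidGroup n := ((List.range' l (s + 1 - l)).map (sigma n)).prod

/-- `Δ_s^l = Π_s^l Π_{s-1}^l ⋯ Π_l^l`  (the identity when `s < l`). -/
def Delta (n l s : ℕ) : BraidGroup n :=
  ((List.range (s + 1 - l)).map (fun k => Pi' n l (s - k))).prod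

/- ### Auxiliary lemmas -/

lemma rel_one {n : ℕ} {r : FreeGroup ℕ} (h : r ∈ braidRels n) :
    (QuotientGroup.mk r : PresentedGroup (braidRels n)) = 1 := by
  rw [QuotientGroup.eq_one_iff]
  exact Subgroup.subset_normalClosure h

lemma braid_rel (n i : ℕ) (h1 : 1 ≤ i) (h2 : i + 2 ≤ n) :
    sigma n i * sigma n (i + 1) * sigma n i = sigma n (i + 1) * sigma n i * sigma n (i + 1) := by
  have h := rel_one (n := n) (Or.inl ⟨i, h1, h2, rfl⟩)
  simp only [QuotientGroup.mk_mul, QuotientGroup.mk_inv, mul_inv_eq_one] at h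
  exact h

lemma comm_rel (n i j : ℕ) (h1 : 1 ≤ i) (h2 : i + 2 ≤ j) (h3 : j + 1 ≤ n) :
    sigma n i * sigma n j = sigma n j * sigma n i := by
  have h := rel_one (n := n) (Or.inr (Or.inl ⟨i, j, h1, h2, h3, rfl⟩))
  simp only [QuotientGroup.mk_mul, QuotientGroup.mk_inv, mul_inv_eq_one] at h
  exact h

lemma list_past {G : Type*} [Group G] (P : G) (f g : ℕ → G) :
    ∀ L : List ℕ, (∀ x ∈ L, f x * P = P * g x) →
      (L.map f).prod * P = P * (L.map g).prod
  | [], _ => by simp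
  | x :: L, h => by
    simp only [List.map_cons, List.prod_cons, mul_assoc]
    rw [list_past P f g L (fun y hy => h y (List.mem_cons_of_mem _ hy)),
      ← mul_assoc, h x List.mem_cons_self, mul_assoc]

lemma Pi'_cons (n l s : ℕ) (h : l ≤ s) :
    Pi' n l s = sigma n l * Pi' n (l + 1) s := by
  unfold Pi'
  have h1 : s + 1 - l = (s - l) + 1 := by omega
  have h2 : s + 1 - (l + 1) = s - l := by omega
  rw [h1, h2, List.range'_succ, List.map_cons, List.prod_cons]

lemma Pi'_split (n l k s : ℕ) (hk : 1 ≤ k) (h1 : l ≤ k) (h2 : k ≤ s + 1) :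
    Pi' n l s = Pi' n l (k - 1) * Pi' n k s := by
  unfold Pi'
  rw [← List.prod_append, ← List.map_append]
  congr 1
  rw [show k - 1 + 1 - l = k - l by omega,
    show s + 1 - l = (s + 1 - k) + (k - l) by omega,
    Nat.add_comm (s + 1 - k) (k - l),
    ← List.range'_append_1 (s := l) (m := k - l) (n := s + 1 - k), show l + (k - l) = k by omega]

lemma comm_left (n t l s : ℕ) (hl : 1 ≤ l) (h : s + 2 ≤ t) (ht : t + 1 ≤ n) :
    Commute (sigma n t) (Pi' n l s) := by
  apply Commute.list_prod_right
  intro x hx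
  simp only [List.mem_map, List.mem_range'_1] at hx
  obtain ⟨u, ⟨hu1, hu2⟩, rfl⟩ := hx
  exact (comm_rel n u t (hl.trans hu1) (by omega) ht).symm

lemma comm_right (n t l s : ℕ) (ht1 : 1 ≤ t) (h : t + 2 ≤ l) (hs : s + 1 ≤ n) :
    Commute (sigma n t) (Pi' n l s) := by
  apply Commute.list_prod_right
  intro x hx
  simp only [List.mem_map, List.mem_range'_1] at hx
  obtain ⟨u, ⟨hu1, hu2⟩, rfl⟩ := hx
  exact comm_rel n t u ht1 (by omega) (by omega)

lemma sigma_shift (n l s t : ℕ) (hl : 1 ≤ l) (hlt : l < t) (hts : t ≤ s) (hs : s + 1 ≤ n) :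
    sigma n t * Pi' n l s = Pi' n l s * sigma n (t - 1) := by
  have ht2 : 2 ≤ t := by omega
  -- split Π_s^l = Π_{t-2}^l * σ_{t-1} * σ_t * Π_s^{t+1}
  have split1 : Pi' n l s = Pi' n l (t - 2) * Pi' n (t - 1) s :=
    Pi'_split n l (t - 1) s (by omega) (by omega) (by omega)
  have c1 : Pi' n (t - 1) s = sigma n (t - 1) * (sigma n t * Pi' n (t + 1) s) := by
    rw [Pi'_cons n (t - 1) s (by omega), show t - 1 + 1 = t by omega,
      Pi'_cons n t s hts]
  have hc1 : Commute (sigma n t) (Pi' n l (t - 2)) :=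
    comm_left n t l (t - 2) hl (by omega) (by omega)
  have hc2 : Commute (sigma n (t - 1)) (Pi' n (t + 1) s) :=
    comm_right n (t - 1) (t + 1) s (by omega) (by omega) hs
  have hb : sigma n t * (sigma n (t - 1) * sigma n t) =
      sigma n (t - 1) * sigma n t * sigma n (t - 1) := by
    have := braid_rel n (t - 1) (by omega) (by omega)
    rw [show t - 1 + 1 = t by omega] at this
    rw [← mul_assoc]
    exact this.symm
  calc sigma n t * Pi' n l s
      = Pi' n l (t - 2) * (sigma n t * (sigma n (t - 1) * sigma n t) * Pi' n (t + 1) s) := by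
        rw [split1, c1, ← mul_assoc, hc1.eq]
        group
    _ = Pi' n l (t - 2) * (sigma n (t - 1) * sigma n t * (sigma n (t - 1) * Pi' n (t + 1) s)) := by
        rw [hb]; group
    _ = Pi' n l s * sigma n (t - 1) := by
        rw [hc2.eq, split1, c1]; group

/-- the "middle word" with parameters `a` (number of factors) and `b` (top index). -/
lemma sigma_past (n : ℕ) : ∀ (a b t : ℕ), b + 1 ≤ n → a + 1 ≤ t → t ≤ b →
    sigma n t * ((List.range a).map (fun j => Pi' n (a - j) (b - j))).prod =
      ((List.range a).map (fun j => Pi' n (a - j) (b - j))).prod * sigma n (t - a)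
  | 0, b, t, _, _, _ => by simp
  | a + 1, b, t, hb, ht1, ht2 => by
    have hdec : ((List.range (a + 1)).map (fun j => Pi' n (a + 1 - j) (b - j))).prod =
        Pi' n (a + 1) b * ((List.range a).map (fun j => Pi' n (a - j) (b - 1 - j))).prod := by
      rw [List.range_succ_eq_map, List.map_cons, List.prod_cons]
      simp only [Nat.sub_zero, List.map_map]
      congr 1
      refine congrArg List.prod (List.map_congr_left fun j _ => ?_)
      simp only [Function.comp_apply, Nat.succ_sub_succ]
      congr 1
      omega
    rw [hdec, ← mul_assoc, sigma_shift n (a + 1) b t (by omega) (by omega) ht2 hb,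
      mul_assoc, sigma_past n a (b - 1) (t - 1) (by omega) (by omega) (by omega),
      ← mul_assoc]
    congr 2
    omega

lemma map_sub_range' (a : ℕ) : ∀ (l c : ℕ), a ≤ l →
    (List.range' l c).map (fun u => u - a) = List.range' (l - a) c
  | l, 0, _ => rfl
  | l, c + 1, h => by
    rw [List.range'_succ, List.map_cons, map_sub_range' a (l + 1) c (by omega),
      show l + 1 - a = l - a + 1 by omega, List.range'_succ]

lemma Pi'_past (n a b l s : ℕ) (hb : b + 1 ≤ n) (hl : a + 1 ≤ l) (hs : s ≤ b) :
    Pi' n l s * ((List.range a).map (fun j => Pi' n (a - j) (b - j))).prod =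
      ((List.range a).map (fun j => Pi' n (a - j) (b - j))).prod * Pi' n (l - a) (s - a) := by
  unfold Pi'
  rw [list_past _ (sigma n) (fun u => sigma n (u - a)) (List.range' l (s + 1 - l))
    (fun x hx => by
      simp only [List.mem_range'_1] at hx
      exact sigma_past n a b x hb (by omega) (by omega))]
  congr 1
  rw [show s - a + 1 - (l - a) = s + 1 - l by omega,
    ← map_sub_range' a l (s + 1 - l) (by omega), List.map_map]
  rfl

theorem stmt12 (q m : ℕ) (hm : 1 ≤ m) (hmq : m ≤ q - 1) :
    Delta q (m + 1) (q - 1) * ((List.range m).map (fun j => Pi' q (m - j) (q - 1 - j))).prod =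
      ((List.range m).map (fun j => Pi' q (m - j) (q - 1 - j))).prod * Delta q 1 (q - m - 1) := by
  have hq : 2 ≤ q := by omega
  unfold Delta
  rw [show q - 1 + 1 - (m + 1) = q - m - 1 by omega, show q - m - 1 + 1 - 1 = q - m - 1 by omega]
  rw [list_past _ (fun k => Pi' q (m + 1) (q - 1 - k)) (fun k => Pi' q 1 (q - m - 1 - k))
    (List.range (q - m - 1))
    (fun k hk => by
      have hk' : k < q - m - 1 := List.mem_range.mp hk
      have := Pi'_past q m (q - 1) (m + 1) (q - 1 - k) (by omega) (by omega) (by omega)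
      rw [show m + 1 - m = 1 by omega, show q - 1 - k - m = q - m - 1 - k by omega] at this
      exact this)]
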